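/- In the setting of the AR sequence 0 → N →^h E →^p τ^{-1}N → 0 with E = P^{⊕n} and h with components f_1,…,f_n a left basis of Hom(N,P), the canonical element Σ_i φ_i ⊗ f_i ∈ *Hom(N,P) ⊗_{End(P)} Hom(N,P) (with {φ_i} the right dual basis) maps to zero under the composition induced by Ψ: *Hom(N,P) → Hom(P, τ^{-1}N) followed by composition of morphisms Hom(P, τ^{-1}N) ⊗ Hom(N,P) → Hom(N, τ^{-1}N). -/

import Mathlib

/-!
STATEMENT 7: In the setting of the AR sequence 0 → N →^h E →^p τ⁻¹N → 0 with
E = P^{⊕n} and the components f_1,…,f_n of h a left End(P)-basis of Hom(N,P),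
the canonical element Σ_i φ_i ⊗ f_i ∈ *Hom(N,P) ⊗_{End P} Hom(N,P) (φ_i the
right dual basis) maps to zero under the map induced by
Ψ : *Hom(N,P) → Hom(P, τ⁻¹N) followed by composition
Hom(P, τ⁻¹N) ⊗ Hom(N,P) → Hom(N, τ⁻¹N).

Concretely, the image of Σ_i φ_i ⊗ f_i under this composition is
Σ_i f_i ≫ Ψ(φ_i), and the statement is that this sum vanishes, where
Ψ(φ) = Σ_j φ(f_j) ≫ g_j ≫ p (g_j the j-th inclusion P → E).
-/

open CategoryTheory CategoryTheory.Limits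

noncomputable section

attribute [local instance] CategoryTheory.Abelian.hasFiniteBiproducts

variable {k : Type*} [Field k]
variable {C : Type*} [Category C] [Abelian C] [Linear k C]
variable {N P N' : C} {n : ℕ}

/-- The map `Ψ : *Hom(N,P) → Hom(P, τ⁻¹N)`, `Ψ(φ) = Σ_j φ(f_j) ≫ g_j ≫ p`. -/
def Psi (h : N ⟶ (⨁ fun _ : Fin n => P)) (p : (⨁ fun _ : Fin n => P) ⟶ N')
    (φ : (N ⟶ P) →ₗ[End P] End P) : P ⟶ N' :=
  ∑ j : Fin n, (φ (h ≫ biproduct.π (fun _ : Fin n => P) j) : P ⟶ P) ≫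
      biproduct.ι (fun _ : Fin n => P) j ≫ p

theorem stmt7
    (hfin : ∀ X Y : C, FiniteDimensional k (X ⟶ Y))
    (hNindec : ¬ IsZero N) (hPindec : ¬ IsZero P)
    (hdivP : ∀ φ : End P, φ ≠ 0 → IsUnit φ)
    -- the AR sequence 0 → N → P^{⊕n} → N' (= τ⁻¹N) → 0
    (h : N ⟶ (⨁ fun _ : Fin n => P)) (p : (⨁ fun _ : Fin n => P) ⟶ N')
    (w : h ≫ p = 0) (hses : (ShortComplex.mk h p w).ShortExact)
    (hnonsplit : ¬ ∃ r : (⨁ fun _ : Fin n => P) ⟶ N, h ≫ r = 𝟙 N)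
    (halmostsplit : ∀ (X : C) (f : N ⟶ X),
        (¬ ∃ r : X ⟶ N, f ≫ r = 𝟙 N) → ∃ g : (⨁ fun _ : Fin n => P) ⟶ X, h ≫ g = f)
    -- the components of h form a left End(P)-basis of Hom(N, P):
    (bb : Module.Basis (Fin n) (End P) (N ⟶ P))
    (hbb : ∀ i, bb i = h ≫ biproduct.π (fun _ : Fin n => P) i) :
    -- Σ_i f_i ≫ Ψ(φ_i) = 0:
    (∑ i : Fin n, bb i ≫ Psi h p (bb.coord i)) = 0 := by
  have key : ∀ i : Fin n, Psi h p (bb.coord i) = biproduct.ι (fun _ : Fin n => P) i ≫ p := by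
    intro i
    unfold Psi
    rw [Finset.sum_eq_single i]
    · have : bb.coord i (h ≫ biproduct.π (fun _ : Fin n => P) i) = 1 := by
        rw [← hbb i, Module.Basis.coord_apply, Module.Basis.repr_self, Finsupp.single_eq_same]
      rw [this]
      exact Category.id_comp _
    · intro j _ hj
      have : bb.coord i (h ≫ biproduct.π (fun _ : Fin n => P) j) = 0 := by
        rw [← hbb j, Module.Basis.coord_apply, Module.Basis.repr_self, Finsupp.single_apply,
          if_neg hj]
      rw [this]
      exact Limits.zero_comp
    · intro hi; exact absurd (Finset.mem_univ i) hi
  calc (∑ i : Fin n, bb i ≫ Psi h p (bb.coord i))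
      = ∑ i : Fin n, h ≫ (biproduct.π (fun _ : Fin n => P) i ≫
          biproduct.ι (fun _ : Fin n => P) i) ≫ p := by
        refine Finset.sum_congr rfl fun i _ => ?_
        rw [key i, hbb i]; simp
    _ = h ≫ p := by
        have htot : (∑ i : Fin n, biproduct.π (fun _ : Fin n => P) i ≫
            biproduct.ι (fun _ : Fin n => P) i) ≫ p = p := by
          rw [biproduct.total, Category.id_comp]
        conv_rhs => rw [← htot]
        simp only [Preadditive.sum_comp, Preadditive.comp_sum, Category.assoc]
    _ = 0 := w

end
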